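/- Let c < d be real numbers, let {d_i}_{i∈ℕ} ⊂ (c,d] be a sequence with lim_{i→∞} d_i = c, and for each i ∈ ℕ let f_i : (c, d_i] → ℝ be a continuous function such that the graphs of f_i and f_j are disjoint for i ≠ j. Then there exists a homeomorphism η : ℝ×(c,d] → ℝ×(c,d] such that: (i) η(ℝ×{y}) = ℝ×{y} for all y ∈ (c,d]; (ii) for each i ∈ ℕ, η maps the graph {(f_i(y), y) : y ∈ (c, d_i]} of f_i onto a vertical segment {q_i}×(c, d_i] for some q_i ∈ ℝ. -/

import Mathlib

noncomputable section
namespace Stmt17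
open Set Filter Function

/-! ### clamp -/

def clamp (u : ℝ) : ℝ := max 0 (min 1 u)

lemma clamp_of_nonpos {u : ℝ} (h : u ≤ 0) : clamp u = 0 := by
  simp [clamp, max_eq_left, min_le_of_right_le h, h]
lemma clamp_of_one_le {u : ℝ} (h : 1 ≤ u) : clamp u = 1 := by
  simp [clamp, min_eq_left h]
lemma clamp_nonneg (u : ℝ) : 0 ≤ clamp u := le_max_left _ _
lemma clamp_le_one (u : ℝ) : clamp u ≤ 1 := max_le zero_le_one (min_le_left _ _)
lemma continuous_clamp : Continuous clamp :=
  continuous_const.max (continuous_const.min continuous_id)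

/-! ### piecewise linear maps -/

def pl : List (ℝ × ℝ) → ℝ → ℝ
  | [], x => x
  | [(a, b)], x => x - a + b
  | (a₁, b₁) :: (a₂, b₂) :: l, x =>
      pl ((a₂, b₂) :: l) x + (b₁ - b₂ - (a₁ - a₂)) * clamp ((a₂ - x) / (a₂ - a₁))

def Valid (l : List (ℝ × ℝ)) : Prop :=
  List.Chain' (fun p q : ℝ × ℝ => p.1 < q.1 ∧ p.2 < q.2) l

lemma Valid.tail' {p : ℝ × ℝ} {l : List (ℝ × ℝ)} (h : Valid (p :: l)) : Valid l :=
  (List.isChain_cons.1 h).2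

@[simp] lemma pl_nil (x : ℝ) : pl [] x = x := rfl
@[simp] lemma pl_single (a b x : ℝ) : pl [(a, b)] x = x - a + b := rfl
lemma pl_cons_cons (a₁ b₁ a₂ b₂ : ℝ) (l : List (ℝ × ℝ)) (x : ℝ) :
    pl ((a₁, b₁) :: (a₂, b₂) :: l) x =
      pl ((a₂, b₂) :: l) x + (b₁ - b₂ - (a₁ - a₂)) * clamp ((a₂ - x) / (a₂ - a₁)) := rfl

/-- below the first node, `pl` is a translation. -/
lemma pl_of_le_head {a b : ℝ} {l : List (ℝ × ℝ)} (hv : Valid ((a, b) :: l))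
    {x : ℝ} (hx : x ≤ a) : pl ((a, b) :: l) x = x - a + b := by
  induction l generalizing a b with
  | nil => simp
  | cons p l ih =>
    obtain ⟨a₂, b₂⟩ := p
    have h12 : a < a₂ ∧ b < b₂ := (List.isChain_cons_cons.1 hv).1
    rw [pl_cons_cons, ih hv.tail' (hx.trans h12.1.le),
      clamp_of_one_le (by rw [le_div_iff₀ (by linarith)]; linarith)]
    ring

/-- head dominates all later nodes. -/
lemma Valid.head_lt {p : ℝ × ℝ} {l : List (ℝ × ℝ)} (hv : Valid (p :: l)) :
    ∀ q ∈ l, p.1 < q.1 ∧ p.2 < q.2 := by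
  induction l generalizing p with
  | nil => simp
  | cons r l ih =>
    intro q hq
    have h1 : p.1 < r.1 ∧ p.2 < r.2 := (List.isChain_cons_cons.1 hv).1
    rcases List.mem_cons.1 hq with rfl | hq
    · exact h1
    · have := ih hv.tail' q hq
      exact ⟨h1.1.trans this.1, h1.2.trans this.2⟩

/-- `pl` maps each node to its target. -/
lemma pl_mem {l : List (ℝ × ℝ)} (hv : Valid l) {a b : ℝ} (hab : (a, b) ∈ l) :
    pl l a = b := by
  induction l with
  | nil => simp at hab
  | cons p l ih =>
    rcases List.mem_cons.1 hab with h | h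
    · rw [← h] at hv ⊢
      rw [pl_of_le_head hv le_rfl]; ring
    · cases l with
      | nil => simp at h
      | cons p₂ l' =>
        obtain ⟨a₁, b₁⟩ := p; obtain ⟨a₂, b₂⟩ := p₂
        have ha₂ : a₂ ≤ a := by
          rcases List.mem_cons.1 h with h' | h'
          · rw [show a₂ = (a,b).1 from by rw [h']]
          · exact (hv.tail'.head_lt _ h').1.le
        rw [pl_cons_cons, clamp_of_nonpos (div_nonpos_of_nonpos_of_nonneg
          (by linarith) (by have := (List.isChain_cons_cons.1 hv).1.1; linarith)),
          ih hv.tail' h]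
        ring

lemma clamp_mono : Monotone clamp :=
  monotone_const.max (monotone_const.min monotone_id)

lemma clamp_lip (u v : ℝ) : |clamp u - clamp v| ≤ |u - v| := by
  have h1 : |clamp u - clamp v| ≤ |min 1 u - min 1 v| := by
    have := abs_max_sub_max_le_abs (min 1 u) (min 1 v) 0
    simpa [clamp, max_comm] using this
  have h2 : |min 1 u - min 1 v| ≤ max |(1:ℝ) - 1| |u - v| :=
    abs_min_sub_min_le_max 1 u 1 v
  rw [sub_self, abs_zero] at h2
  exact h1.trans (h2.trans (le_of_eq (max_eq_right (abs_nonneg _))))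

lemma clamp_sub_le {v u : ℝ} (h : v ≤ u) : clamp u - clamp v ≤ u - v :=
  (le_abs_self _).trans ((clamp_lip u v).trans (le_of_eq (abs_of_nonneg (by linarith))))

lemma strictMonoOn_glue {g : ℝ → ℝ} {a x y : ℝ} (hx : x ≤ a) (hy : a ≤ y) (hxy : x < y)
    (h1 : StrictMonoOn g (Set.Iic a)) (h2 : StrictMonoOn g (Set.Ici a)) : g x < g y := by
  rcases eq_or_lt_of_le hx with rfl | hx'
  · exact h2 Set.self_mem_Ici hy hxy
  · have hga : g x < g a := h1 hx Set.self_mem_Iic hx'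
    have hay : g a ≤ g y := by
      rcases eq_or_lt_of_le hy with rfl | hy'
      · exact le_rfl
      · exact (h2 Set.self_mem_Ici hy hy').le
    exact hga.trans_le hay

lemma pl_strictMono {l : List (ℝ × ℝ)} (hv : Valid l) : StrictMono (pl l) := by
  induction l with
  | nil => exact strictMono_id
  | cons p l ih =>
    obtain ⟨a₁, b₁⟩ := p
    cases l with
    | nil => intro x y hxy; simpa using hxy
    | cons p₂ l' =>
      obtain ⟨a₂, b₂⟩ := p₂
      have hD : (0:ℝ) < a₂ - a₁ := by
        have := (List.isChain_cons_cons.1 hv).1.1; simpa using sub_pos.2 this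
      have hB : b₁ < b₂ := (List.isChain_cons_cons.1 hv).1.2
      have ihg : StrictMono (pl ((a₂, b₂) :: l')) := ih hv.tail'
      have h2 : StrictMonoOn (pl ((a₁, b₁) :: (a₂, b₂) :: l')) (Set.Ici a₂) := by
        intro x hx y hy hxy
        rw [pl_cons_cons, pl_cons_cons,
          clamp_of_nonpos (div_nonpos_of_nonpos_of_nonneg (by simp at hx; linarith) hD.le),
          clamp_of_nonpos (div_nonpos_of_nonpos_of_nonneg
            (by simp at hx hy; linarith) hD.le)]
        simpa using ihg hxy
      have h1 : StrictMonoOn (pl ((a₁, b₁) :: (a₂, b₂) :: l')) (Set.Iic a₂) := by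
        intro x hx y hy hxy
        simp only [Set.mem_Iic] at hx hy
        rw [pl_cons_cons, pl_cons_cons, pl_of_le_head hv.tail' hx, pl_of_le_head hv.tail' hy]
        set C := b₁ - b₂ - (a₁ - a₂) with hC
        clear_value C
        have huu : (a₂ - y) / (a₂ - a₁) ≤ (a₂ - x) / (a₂ - a₁) :=
          by gcongr <;> linarith
        have h0 : 0 ≤ clamp ((a₂ - x) / (a₂ - a₁)) - clamp ((a₂ - y) / (a₂ - a₁)) :=
          sub_nonneg.2 (clamp_mono huu)
        have hsub : clamp ((a₂ - x) / (a₂ - a₁)) - clamp ((a₂ - y) / (a₂ - a₁)) ≤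
            (y - x) / (a₂ - a₁) := by
          refine (clamp_sub_le huu).trans (le_of_eq ?_)
          field_simp
          ring
        set e := clamp ((a₂ - x) / (a₂ - a₁)) - clamp ((a₂ - y) / (a₂ - a₁)) with he
        clear_value e
        have hgoal : C * e < y - x := by
          rcases le_or_gt C 0 with hc | hc
          · have : C * e ≤ 0 := mul_nonpos_of_nonpos_of_nonneg hc h0
            linarith
          · have h3 : C * e ≤ C * ((y - x) / (a₂ - a₁)) :=
              mul_le_mul_of_nonneg_left hsub hc.le
            have h4 : C * ((y - x) / (a₂ - a₁)) < y - x := by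
              rw [mul_div_assoc']
              rw [div_lt_iff₀ hD]
              nlinarith
            linarith
          done
        have hexp : clamp ((a₂ - x) / (a₂ - a₁)) = clamp ((a₂ - y) / (a₂ - a₁)) + e := by
          rw [he]; ring
        rw [hexp, mul_add]
        linarith [hgoal]
      intro x y hxy
      rcases le_total y a₂ with h | h
      · exact h1 (Set.mem_Iic.2 (hxy.le.trans h)) (Set.mem_Iic.2 h) hxy
      · rcases le_total x a₂ with h' | h'
        · exact strictMonoOn_glue h' h hxy h1 h2
        · exact h2 (Set.mem_Ici.2 h') (Set.mem_Ici.2 (h'.trans hxy.le)) hxy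

lemma pl_continuous (l : List (ℝ × ℝ)) : Continuous (pl l) := by
  induction l with
  | nil => exact continuous_id
  | cons p l ih =>
    obtain ⟨a₁, b₁⟩ := p
    cases l with
    | nil =>
      rw [show pl [(a₁, b₁)] = fun x => x - a₁ + b₁ from rfl]
      continuity
    | cons p₂ l' =>
      obtain ⟨a₂, b₂⟩ := p₂
      rw [show pl ((a₁, b₁) :: (a₂, b₂) :: l') = fun x =>
        pl ((a₂, b₂) :: l') x + (b₁ - b₂ - (a₁ - a₂)) * clamp ((a₂ - x) / (a₂ - a₁)) from rfl]
      exact ih.add (continuous_const.mul (continuous_clamp.comp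
        ((continuous_const.sub continuous_id).div_const _)))

lemma pl_tendsto_atTop (l : List (ℝ × ℝ)) : Tendsto (pl l) atTop atTop := by
  induction l with
  | nil => exact tendsto_id
  | cons p l ih =>
    obtain ⟨a₁, b₁⟩ := p
    cases l with
    | nil =>
      rw [show pl [(a₁, b₁)] = fun x => x + (b₁ - a₁) from funext fun x => by
        simp; ring]
      exact tendsto_atTop_add_const_right atTop (b₁ - a₁) tendsto_id
    | cons p₂ l' =>
      obtain ⟨a₂, b₂⟩ := p₂
      refine tendsto_atTop_mono (fun x => ?_)
        (tendsto_atTop_add_const_right atTop (-|b₁ - b₂ - (a₁ - a₂)|) ih)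
      rw [pl_cons_cons]
      have h1 : (b₁ - b₂ - (a₁ - a₂)) * clamp ((a₂ - x) / (a₂ - a₁)) ≥
          -|b₁ - b₂ - (a₁ - a₂)| := by
        have := clamp_nonneg ((a₂ - x) / (a₂ - a₁))
        have := clamp_le_one ((a₂ - x) / (a₂ - a₁))
        rcases le_or_gt 0 (b₁ - b₂ - (a₁ - a₂)) with h | h
        · nlinarith [abs_nonneg (b₁ - b₂ - (a₁ - a₂))]
        · rw [abs_of_neg h]; nlinarith
      linarith
  done

lemma pl_tendsto_atBot (l : List (ℝ × ℝ)) : Tendsto (pl l) atBot atBot := by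
  induction l with
  | nil => exact tendsto_id
  | cons p l ih =>
    obtain ⟨a₁, b₁⟩ := p
    cases l with
    | nil =>
      rw [show pl [(a₁, b₁)] = fun x => x + (b₁ - a₁) from funext fun x => by
        simp; ring]
      exact tendsto_atBot_add_const_right atBot (b₁ - a₁) tendsto_id
    | cons p₂ l' =>
      obtain ⟨a₂, b₂⟩ := p₂
      refine tendsto_atBot_mono (fun x => ?_)
        (tendsto_atBot_add_const_right atBot (|b₁ - b₂ - (a₁ - a₂)|) ih)
      rw [pl_cons_cons]
      have h1 : (b₁ - b₂ - (a₁ - a₂)) * clamp ((a₂ - x) / (a₂ - a₁)) ≤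
          |b₁ - b₂ - (a₁ - a₂)| := by
        have := clamp_nonneg ((a₂ - x) / (a₂ - a₁))
        have := clamp_le_one ((a₂ - x) / (a₂ - a₁))
        rcases le_or_gt 0 (b₁ - b₂ - (a₁ - a₂)) with h | h
        · rw [abs_of_nonneg h]; nlinarith
        · nlinarith [abs_nonneg (b₁ - b₂ - (a₁ - a₂))]
      linarith

lemma pl_surjective (l : List (ℝ × ℝ)) : Function.Surjective (pl l) :=
  Continuous.surjective (pl_continuous l) (pl_tendsto_atTop l) (pl_tendsto_atBot l)

/-- joint continuity of `pl` in argument and node positions. -/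
lemma pl_param_continuousOn {S : Set ℝ} {f : ℕ → ℝ → ℝ} {q : ℕ → ℝ} {L : List ℕ}
    (hf : ∀ i ∈ L, ContinuousOn (f i) S)
    (hsep : L.Chain' (fun i j => ∀ y ∈ S, f i y < f j y)) :
    ContinuousOn (fun p : ℝ × ℝ => pl (L.map fun i => (f i p.2, q i)) p.1)
      {p : ℝ × ℝ | p.2 ∈ S} := by
  have hcomp : ∀ i ∈ L, ContinuousOn (fun p : ℝ × ℝ => f i p.2) {p : ℝ × ℝ | p.2 ∈ S} :=
    fun i hi => (hf i hi).comp continuous_snd.continuousOn (fun p hp => hp)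
  induction L with
  | nil => simpa using continuous_fst.continuousOn
  | cons i L ih =>
    cases L with
    | nil =>
      simp only [List.map_cons, List.map_nil, pl_single]
      exact ((continuous_fst.continuousOn.sub
        (hcomp i (by simp))).add continuousOn_const)
    | cons j L' =>
      have hsep1 : ∀ y ∈ S, f i y < f j y := (List.isChain_cons_cons.1 hsep).1
      have hbase := ih (fun k hk => hf k (List.mem_cons_of_mem _ hk)) (List.isChain_cons.1 hsep).2
        (fun k hk => hcomp k (List.mem_cons_of_mem _ hk))
      simp only [List.map_cons] at hbase ⊢
      rw [show (fun p : ℝ × ℝ => pl ((f i p.2, q i) :: (f j p.2, q j) ::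
          L'.map fun k => (f k p.2, q k)) p.1) = fun p : ℝ × ℝ =>
          pl ((f j p.2, q j) :: L'.map fun k => (f k p.2, q k)) p.1 +
          (q i - q j - (f i p.2 - f j p.2)) *
            clamp ((f j p.2 - p.1) / (f j p.2 - f i p.2)) from rfl]
      refine hbase.add (ContinuousOn.mul ?_ (continuous_clamp.comp_continuousOn
        (ContinuousOn.div ?_ ?_ ?_)))
      · exact (continuousOn_const.sub continuousOn_const).sub
          ((hcomp i (by simp)).sub (hcomp j (by simp)))
      · exact (hcomp j (by simp)).sub continuous_fst.continuousOn
      · exact (hcomp j (by simp)).sub (hcomp i (by simp))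
      · intro p hp
        exact sub_ne_zero.2 (ne_of_gt (hsep1 p.2 hp))

/-! ### ordering the strands -/

section Order

variable {c : ℝ} {t : ℕ → ℝ} {f : ℕ → ℝ → ℝ}

/-- the order relation between strands. -/
def R (t : ℕ → ℝ) (f : ℕ → ℝ → ℝ) (i j : ℕ) : Prop :=
  i ≠ j ∧ f i (min (t i) (t j)) < f j (min (t i) (t j))

variable (ht : ∀ i, c < t i) (hf : ∀ i, ContinuousOn (f i) (Set.Ioc c (t i)))
  (hdisj : ∀ i j, i ≠ j →
      ∀ y, y ∈ Set.Ioc c (t i) → y ∈ Set.Ioc c (t j) → f i y ≠ f j y)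

include ht hf hdisj

lemma sign_const {i j : ℕ} (hij : i ≠ j) {y z : ℝ}
    (hy : y ∈ Set.Ioc c (min (t i) (t j))) (hz : z ∈ Set.Ioc c (min (t i) (t j)))
    (h : f i y < f j y) : f i z < f j z := by
  have hsubi : Set.Ioc c (min (t i) (t j)) ⊆ Set.Ioc c (t i) :=
    Set.Ioc_subset_Ioc le_rfl (min_le_left _ _)
  have hsubj : Set.Ioc c (min (t i) (t j)) ⊆ Set.Ioc c (t j) :=
    Set.Ioc_subset_Ioc le_rfl (min_le_right _ _)
  by_contra h'
  have hzlt : f j z < f i z :=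
    lt_of_le_of_ne (not_lt.1 h') (hdisj j i (Ne.symm hij) z (hsubj hz) (hsubi hz))
  have huIcc : Set.uIcc y z ⊆ Set.Ioc c (min (t i) (t j)) :=
    Set.OrdConnected.uIcc_subset Set.ordConnected_Ioc hy hz
  have hg : ContinuousOn (fun u => f i u - f j u) (Set.uIcc y z) :=
    ((hf i).mono (huIcc.trans hsubi)).sub ((hf j).mono (huIcc.trans hsubj))
  have h0 : (0:ℝ) ∈ Set.uIcc (f i y - f j y) (f i z - f j z) := by
    rw [Set.mem_uIcc]; left; constructor <;> linarith
  obtain ⟨x, hx, hx0⟩ := intermediate_value_uIcc hg h0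
  simp only [sub_eq_zero] at hx0
  exact hdisj i j hij x (hsubi (huIcc hx)) (hsubj (huIcc hx)) hx0

lemma R_iff_at {i j : ℕ} (hij : i ≠ j) {y : ℝ}
    (hy : y ∈ Set.Ioc c (min (t i) (t j))) : R t f i j ↔ f i y < f j y := by
  have hm : min (t i) (t j) ∈ Set.Ioc c (min (t i) (t j)) :=
    ⟨lt_min (ht i) (ht j), le_rfl⟩
  constructor
  · exact fun h => sign_const ht hf hdisj hij hm hy h.2
  · exact fun h => ⟨hij, sign_const ht hf hdisj hij hy hm h⟩

lemma R_total {i j : ℕ} (hij : i ≠ j) : R t f i j ∨ R t f j i := by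
  have hm : min (t i) (t j) ∈ Set.Ioc c (min (t i) (t j)) :=
    ⟨lt_min (ht i) (ht j), le_rfl⟩
  have hne := hdisj i j hij (min (t i) (t j))
    (Set.Ioc_subset_Ioc le_rfl (min_le_left _ _) hm)
    (Set.Ioc_subset_Ioc le_rfl (min_le_right _ _) hm)
  rcases lt_or_gt_of_ne hne with h | h
  · exact Or.inl ⟨hij, h⟩
  · exact Or.inr ⟨hij.symm, by rwa [min_comm]⟩

lemma R_asymm {i j : ℕ} (h1 : R t f i j) : ¬ R t f j i := by
  intro h2
  obtain ⟨-, h2'⟩ := h2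
  rw [min_comm (t j) (t i)] at h2'
  exact absurd h1.2 (not_lt.2 h2'.le)

lemma R_trans {i j k : ℕ} (h1 : R t f i j) (h2 : R t f j k) : R t f i k := by
  have hik : i ≠ k := by
    rintro rfl
    exact R_asymm ht hf hdisj h1 h2
  set m := min (t i) (min (t j) (t k)) with hm
  have hmem : ∀ a : ℕ, t i ≤ t a ∨ t j ≤ t a ∨ t k ≤ t a →
      ∀ b : ℕ, t i ≤ t b ∨ t j ≤ t b ∨ t k ≤ t b →
      m ∈ Set.Ioc c (min (t a) (t b)) := by
    intro a ha b hb
    refine ⟨lt_min (ht i) (lt_min (ht j) (ht k)), le_min ?_ ?_⟩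
    · rcases ha with h | h | h
      · exact (min_le_left _ _).trans h
      · exact ((min_le_right _ _).trans (min_le_left _ _)).trans h
      · exact ((min_le_right _ _).trans (min_le_right _ _)).trans h
    · rcases hb with h | h | h
      · exact (min_le_left _ _).trans h
      · exact ((min_le_right _ _).trans (min_le_left _ _)).trans h
      · exact ((min_le_right _ _).trans (min_le_right _ _)).trans h
  have e1 : f i m < f j m := (R_iff_at ht hf hdisj h1.1
    (hmem i (Or.inl le_rfl) j (Or.inr (Or.inl le_rfl)))).1 h1
  have e2 : f j m < f k m := (R_iff_at ht hf hdisj h2.1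
    (hmem j (Or.inr (Or.inl le_rfl)) k (Or.inr (Or.inr le_rfl)))).1 h2
  exact (R_iff_at ht hf hdisj hik
    (hmem i (Or.inl le_rfl) k (Or.inr (Or.inr le_rfl)))).2 (e1.trans e2)

end Order

/-! ### the targets `q` -/

open Classical in
/-- summand for the target values. -/
def qterm (t : ℕ → ℝ) (f : ℕ → ℝ → ℝ) (i j : ℕ) : ℝ :=
  if R t f j i ∨ j = i then ((2:ℝ)⁻¹) ^ j else 0

/-- target values compatible with the order `R`. -/
def qval (t : ℕ → ℝ) (f : ℕ → ℝ → ℝ) (i : ℕ) : ℝ :=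
  ∑' j : ℕ, qterm t f i j

lemma qterm_nonneg (t : ℕ → ℝ) (f : ℕ → ℝ → ℝ) (i j : ℕ) : 0 ≤ qterm t f i j := by
  unfold qterm; split <;> positivity

lemma qterm_le (t : ℕ → ℝ) (f : ℕ → ℝ → ℝ) (i j : ℕ) : qterm t f i j ≤ ((2:ℝ)⁻¹) ^ j := by
  unfold qterm; split
  · exact le_rfl
  · positivity

lemma qval_summable (t : ℕ → ℝ) (f : ℕ → ℝ → ℝ) (i : ℕ) :
    Summable (qterm t f i) :=
  Summable.of_nonneg_of_le (qterm_nonneg t f i) (qterm_le t f i)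
    (summable_geometric_of_lt_one (by norm_num) (by norm_num : (2:ℝ)⁻¹ < 1))

section qsec
variable {c : ℝ} {t : ℕ → ℝ} {f : ℕ → ℝ → ℝ}
variable (ht : ∀ i, c < t i) (hf : ∀ i, ContinuousOn (f i) (Set.Ioc c (t i)))
  (hdisj : ∀ i j, i ≠ j →
      ∀ y, y ∈ Set.Ioc c (t i) → y ∈ Set.Ioc c (t j) → f i y ≠ f j y)
include ht hf hdisj

lemma qval_lt {i j : ℕ} (h : R t f i j) : qval t f i < qval t f j := by
  classical
  refine Summable.tsum_lt_tsum (i := j) (fun k => ?_) ?_ (qval_summable t f i) (qval_summable t f j)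
  · unfold qterm
    split
    · rename_i hk
      rw [if_pos]
      rcases hk with hk | rfl
      · exact Or.inl (R_trans ht hf hdisj hk h)
      · exact Or.inl h
    · split
      · positivity
      · exact le_rfl
  · unfold qterm
    rw [if_neg, if_pos (Or.inr rfl)]
    · positivity
    · rintro (hk | rfl)
      · exact R_asymm ht hf hdisj h hk
      · exact h.1 rfl

end qsec

/-! ### the decreasing sequence of levels -/

section Tau

variable {c d : ℝ} {t : ℕ → ℝ}

lemma finite_above (htc : Tendsto t atTop (nhds c)) {r : ℝ} (hr : c < r) :
    {i : ℕ | r ≤ t i}.Finite := by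
  have hev : ∀ᶠ i in atTop, t i < r := htc.eventually (eventually_lt_nhds hr)
  obtain ⟨N, hN⟩ := eventually_atTop.1 hev
  exact (Set.finite_Iio N).subset (fun i hi => by
    by_contra h
    exact absurd (hN i (not_lt.1 h)) (not_lt.2 hi))

lemma exists_max_below (ht : ∀ i, c < t i) (htc : Tendsto t atTop (nhds c))
    {r : ℝ} (hr : c < r) : ∃ i, t i < r ∧ ∀ j, t j < r → t j ≤ t i := by
  obtain ⟨i₀, hi₀⟩ := (htc.eventually (eventually_lt_nhds hr)).exists
  have hfin : {j : ℕ | t i₀ ≤ t j ∧ t j < r}.Finite :=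
    (finite_above htc (ht i₀)).subset (fun j hj => hj.1)
  obtain ⟨a, ha, hmax⟩ := Set.Finite.exists_maximalFor t _ hfin ⟨i₀, le_rfl, hi₀⟩
  refine ⟨a, ha.2, fun j hj => ?_⟩
  rcases le_total (t j) (t i₀) with h | h
  · exact h.trans ha.1
  · rcases le_total (t j) (t a) with h' | h'
    · exact h'
    · exact hmax ⟨h, hj⟩ h'

variable (hcd : c < d) (ht : ∀ i, c < t i) (htc : Tendsto t atTop (nhds c))

/-- the decreasing sequence of levels, starting at `d`. -/
noncomputable def tauAux (hcd : c < d) (ht : ∀ i, c < t i)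
    (htc : Tendsto t atTop (nhds c)) : ℕ → {r : ℝ // c < r}
  | 0 => ⟨d, hcd⟩
  | k+1 => ⟨t (exists_max_below ht htc (tauAux hcd ht htc k).2).choose,
      ht _⟩

noncomputable def tau (hcd : c < d) (ht : ∀ i, c < t i)
    (htc : Tendsto t atTop (nhds c)) (k : ℕ) : ℝ :=
  (tauAux hcd ht htc k).1

lemma tau_zero : tau hcd ht htc 0 = d := rfl

lemma tau_pos (k : ℕ) : c < tau hcd ht htc k := (tauAux hcd ht htc k).2

lemma tau_succ_lt (k : ℕ) : tau hcd ht htc (k+1) < tau hcd ht htc k :=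
  (exists_max_below ht htc (tauAux hcd ht htc k).2).choose_spec.1

lemma tau_succ_max (k : ℕ) : ∀ j, t j < tau hcd ht htc k → t j ≤ tau hcd ht htc (k+1) :=
  (exists_max_below ht htc (tauAux hcd ht htc k).2).choose_spec.2

lemma tau_succ_ex (k : ℕ) : ∃ i, t i = tau hcd ht htc (k+1) := ⟨_, rfl⟩

lemma tau_anti : StrictAnti (tau hcd ht htc) :=
  strictAnti_nat_of_succ_lt (tau_succ_lt hcd ht htc)

lemma tau_le_d (k : ℕ) : tau hcd ht htc k ≤ d := by
  induction k with
  | zero => exact le_rfl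
  | succ k ih => exact (tau_succ_lt hcd ht htc k).le.trans ih

lemma tau_exists_lt {y : ℝ} (hy : c < y) : ∃ k, tau hcd ht htc (k+1) < y := by
  by_contra h
  push_neg at h
  have hinj : Function.Injective (fun k => tau hcd ht htc (k+1)) :=
    fun a b hab => by
      have := (tau_anti hcd ht htc).injective (a₁ := a+1) (a₂ := b+1) hab
      omega
  have hsub : Set.range (fun k => tau hcd ht htc (k+1)) ⊆ t '' {i : ℕ | y ≤ t i} := by
    rintro r ⟨k, rfl⟩
    obtain ⟨i, hi⟩ := tau_succ_ex hcd ht htc k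
    exact ⟨i, by simp only [Set.mem_setOf_eq, hi]; exact h k, hi⟩
  exact Set.infinite_range_of_injective hinj
    (((finite_above htc hy).image t).subset hsub)

open Classical in
/-- the index of the interval containing `y`. -/
noncomputable def Kof (y : ℝ) : ℕ :=
  if h : ∃ k, tau hcd ht htc (k+1) < y then Nat.find h else 0

lemma Kof_mem {y : ℝ} (hy : c < y) (hyd : y ≤ d) :
    y ∈ Set.Ioc (tau hcd ht htc (Kof hcd ht htc y + 1)) (tau hcd ht htc (Kof hcd ht htc y)) := by
  have h : ∃ k, tau hcd ht htc (k+1) < y := tau_exists_lt hcd ht htc hy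
  rw [Kof, dif_pos h]
  refine ⟨Nat.find_spec h, ?_⟩
  rcases Nat.eq_zero_or_pos (Nat.find h) with h0 | h0
  · rw [h0, tau_zero]; exact hyd
  · obtain ⟨m, hm⟩ := Nat.exists_eq_succ_of_ne_zero h0.ne'
    rw [hm]
    have := Nat.find_min h (m := m) (by omega)
    exact not_lt.1 this

lemma Kof_eq {y : ℝ} {k : ℕ} (hk : y ∈ Set.Ioc (tau hcd ht htc (k+1)) (tau hcd ht htc k)) :
    Kof hcd ht htc y = k := by
  have h : ∃ k, tau hcd ht htc (k+1) < y := ⟨k, hk.1⟩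
  rw [Kof, dif_pos h]
  rw [Nat.find_eq_iff]
  refine ⟨hk.1, fun m hm => not_lt.2 ?_⟩
  calc y ≤ tau hcd ht htc k := hk.2
    _ ≤ tau hcd ht htc (m+1) := (tau_anti hcd ht htc).antitone (by omega)

/-- within an interval the active strands are those alive at the top. -/
lemma active_iff {y : ℝ} {k : ℕ} (hk : y ∈ Set.Ioc (tau hcd ht htc (k+1)) (tau hcd ht htc k))
    (i : ℕ) : y ≤ t i ↔ tau hcd ht htc k ≤ t i := by
  constructor
  · intro h
    by_contra h'
    exact absurd ((tau_succ_max hcd ht htc k i (not_le.1 h')).trans_lt hk.1) (not_lt.2 h)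
  · exact fun h => hk.2.trans h

end Tau

/-! ### inverse of pl -/

noncomputable def plinv (l : List (ℝ × ℝ)) : ℝ → ℝ := Function.invFun (pl l)

lemma pl_plinv (l : List (ℝ × ℝ)) (z : ℝ) : pl l (plinv l z) = z :=
  Function.invFun_eq (pl_surjective l z)

lemma plinv_pl {l : List (ℝ × ℝ)} (hv : Valid l) (x : ℝ) : plinv l (pl l x) = x :=
  Function.leftInverse_invFun (pl_strictMono hv).injective x

lemma plinv_strictMono {l : List (ℝ × ℝ)} (hv : Valid l) : StrictMono (plinv l) := by
  intro a b hab
  have ha := pl_plinv l a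
  have hb := pl_plinv l b
  by_contra h
  have : pl l (plinv l b) ≤ pl l (plinv l a) :=
    (pl_strictMono hv).monotone (not_lt.1 h)
  rw [ha, hb] at this
  exact absurd hab (not_lt.2 this)

lemma plinv_surjective {l : List (ℝ × ℝ)} (hv : Valid l) : Function.Surjective (plinv l) :=
  fun x => ⟨pl l x, plinv_pl hv x⟩

lemma plinv_continuous {l : List (ℝ × ℝ)} (hv : Valid l) : Continuous (plinv l) :=
  ((plinv_strictMono hv).orderIsoOfSurjective _ (plinv_surjective hv)).continuous

/-! ### sorted active lists -/

section Main

variable {c d : ℝ} {t : ℕ → ℝ} {f : ℕ → ℝ → ℝ}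

lemma sorted_exists (ht : ∀ i, c < t i) (htc : Tendsto t atTop (nhds c))
    (hf : ∀ i, ContinuousOn (f i) (Set.Ioc c (t i)))
    (hdisj : ∀ i j, i ≠ j →
      ∀ y, y ∈ Set.Ioc c (t i) → y ∈ Set.Ioc c (t j) → f i y ≠ f j y)
    {r : ℝ} (hr : c < r) :
    ∃ L : List ℕ, (∀ i, i ∈ L ↔ r ≤ t i) ∧ L.Chain' (R t f) := by
  classical
  set Rle : ℕ → ℕ → Prop := fun i j => R t f i j ∨ i = j with hRle
  letI : DecidableRel Rle := fun i j => Classical.dec _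
  haveI : IsTrans ℕ Rle := ⟨by
    rintro a b c (h1 | rfl) (h2 | rfl)
    · exact Or.inl (R_trans ht hf hdisj h1 h2)
    · exact Or.inl h1
    · exact Or.inl h2
    · exact Or.inr rfl⟩
  haveI : IsAntisymm ℕ Rle := ⟨by
    rintro a b (h1 | h1) (h2 | h2)
    · exact absurd h1 (R_asymm ht hf hdisj h2)
    · exact h2.symm
    · exact h1
    · exact h1⟩
  haveI : IsTotal ℕ Rle := ⟨by
    intro a b
    rcases eq_or_ne a b with rfl | hab
    · exact Or.inl (Or.inr rfl)
    · rcases R_total ht hf hdisj hab with h | h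
      · exact Or.inl (Or.inl h)
      · exact Or.inr (Or.inl h)⟩
  set F : Finset ℕ := (finite_above htc hr).toFinset with hF
  refine ⟨F.sort Rle, fun i => ?_, ?_⟩
  · rw [Finset.mem_sort, hF, Set.Finite.mem_toFinset]; rfl
  · have hs : (F.sort Rle).Pairwise Rle := Finset.pairwise_sort F Rle
    have hn : (F.sort Rle).Pairwise (Ne) := (Finset.sort_nodup F Rle)
    have : (F.sort Rle).Pairwise (R t f) := by
      refine (hs.and hn).imp ?_
      rintro a b ⟨h1 | rfl, h2⟩
      · exact h1
      · exact absurd rfl h2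
    exact this.isChain

variable (hcd : c < d) (ht : ∀ i, c < t i) (htc : Tendsto t atTop (nhds c))
  (hf : ∀ i, ContinuousOn (f i) (Set.Ioc c (t i)))
  (hdisj : ∀ i j, i ≠ j →
      ∀ y, y ∈ Set.Ioc c (t i) → y ∈ Set.Ioc c (t j) → f i y ≠ f j y)

/-- the sorted list of strands active on interval `k`. -/
noncomputable def Lk (k : ℕ) : List ℕ :=
  (sorted_exists ht htc hf hdisj (tau_pos hcd ht htc k)).choose

lemma Lk_mem (k : ℕ) (i : ℕ) : i ∈ Lk hcd ht htc hf hdisj k ↔ tau hcd ht htc k ≤ t i :=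
  (sorted_exists ht htc hf hdisj (tau_pos hcd ht htc k)).choose_spec.1 i

lemma Lk_chain (k : ℕ) : (Lk hcd ht htc hf hdisj k).Chain' (R t f) :=
  (sorted_exists ht htc hf hdisj (tau_pos hcd ht htc k)).choose_spec.2

/-- the nodes of the piecewise linear map on interval `k` at height `y`. -/
noncomputable def nodes (k : ℕ) (y : ℝ) : List (ℝ × ℝ) :=
  (Lk hcd ht htc hf hdisj k).map (fun i => (f i y, qval t f i))

lemma nodes_valid (k : ℕ) {y : ℝ} (hy : y ∈ Set.Ioc c (tau hcd ht htc k)) :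
    Valid (nodes hcd ht htc hf hdisj k y) := by
  letI : IsTrans ℕ (R t f) := ⟨fun _ _ _ h1 h2 => R_trans ht hf hdisj h1 h2⟩
  have hp : (Lk hcd ht htc hf hdisj k).Pairwise (R t f) :=
    List.isChain_iff_pairwise.1 (Lk_chain hcd ht htc hf hdisj k)
  have hp2 : (Lk hcd ht htc hf hdisj k).Pairwise
      (fun i j => f i y < f j y ∧ qval t f i < qval t f j) := by
    refine List.Pairwise.imp_of_mem ?_ hp
    intro i j hi hj hR
    have hti : tau hcd ht htc k ≤ t i := (Lk_mem hcd ht htc hf hdisj k i).1 hi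
    have htj : tau hcd ht htc k ≤ t j := (Lk_mem hcd ht htc hf hdisj k j).1 hj
    have hymem : y ∈ Set.Ioc c (min (t i) (t j)) :=
      ⟨hy.1, le_min (hy.2.trans hti) (hy.2.trans htj)⟩
    exact ⟨(R_iff_at ht hf hdisj hR.1 hymem).1 hR, qval_lt ht hf hdisj hR⟩
  rw [Valid, nodes, List.Chain', List.isChain_map]
  exact hp2.isChain

lemma nodes_pin (k : ℕ) {y : ℝ} (hy : y ∈ Set.Ioc c (tau hcd ht htc k)) {i : ℕ}
    (hi : i ∈ Lk hcd ht htc hf hdisj k) :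
    pl (nodes hcd ht htc hf hdisj k y) (f i y) = qval t f i :=
  pl_mem (nodes_valid hcd ht htc hf hdisj k hy)
    (by rw [nodes]; exact List.mem_map_of_mem hi)

/-- the straightening map on interval `k` (with a bridge towards interval `k+1`). -/
noncomputable def Ek (k : ℕ) (p : ℝ × ℝ) : ℝ :=
  (1 - (tau hcd ht htc k - p.2) / (tau hcd ht htc k - tau hcd ht htc (k+1))) *
      pl (nodes hcd ht htc hf hdisj k p.2) p.1 +
    (tau hcd ht htc k - p.2) / (tau hcd ht htc k - tau hcd ht htc (k+1)) *
      pl (nodes hcd ht htc hf hdisj (k+1) (tau hcd ht htc (k+1)))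
        (plinv (nodes hcd ht htc hf hdisj k (tau hcd ht htc (k+1)))
          (pl (nodes hcd ht htc hf hdisj k p.2) p.1))

/-- the global straightening map. -/
noncomputable def theta (p : ℝ × ℝ) : ℝ :=
  Ek hcd ht htc hf hdisj (Kof hcd ht htc p.2) p

end Main

/-! ### helper tendsto lemmas -/

lemma mono_surj_tendsto_atTop {g : ℝ → ℝ} (hm : Monotone g) (hs : Function.Surjective g) :
    Tendsto g atTop atTop :=
  hm.tendsto_atTop_atTop (fun b => (hs b).imp fun a ha => ha.ge)

lemma mono_surj_tendsto_atBot {g : ℝ → ℝ} (hm : Monotone g) (hs : Function.Surjective g) :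
    Tendsto g atBot atBot :=
  hm.tendsto_atBot_atBot (fun b => (hs b).imp fun a ha => ha.le)

lemma convex_tendsto_atTop {u v : ℝ → ℝ} {s : ℝ} (hs0 : 0 ≤ s) (hs1 : s ≤ 1)
    (hu : Tendsto u atTop atTop) (hv : Tendsto v atTop atTop) :
    Tendsto (fun x => (1 - s) * u x + s * v x) atTop atTop := by
  rw [tendsto_atTop]
  intro M
  filter_upwards [tendsto_atTop.1 hu |M|, tendsto_atTop.1 hv |M|] with x h1 h2
  have e1 : (1 - s) * |M| ≤ (1 - s) * u x := by nlinarith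
  have e2 : s * |M| ≤ s * v x := by nlinarith
  nlinarith [le_abs_self M]

lemma convex_tendsto_atBot {u v : ℝ → ℝ} {s : ℝ} (hs0 : 0 ≤ s) (hs1 : s ≤ 1)
    (hu : Tendsto u atBot atBot) (hv : Tendsto v atBot atBot) :
    Tendsto (fun x => (1 - s) * u x + s * v x) atBot atBot := by
  rw [tendsto_atBot]
  intro M
  filter_upwards [tendsto_atBot.1 hu (-|M|), tendsto_atBot.1 hv (-|M|)] with x h1 h2
  have e1 : (1 - s) * u x ≤ (1 - s) * (-|M|) := by nlinarith
  have e2 : s * v x ≤ s * (-|M|) := by nlinarith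
  nlinarith [neg_abs_le M]

section Main2

variable {c d : ℝ} {t : ℕ → ℝ} {f : ℕ → ℝ → ℝ}
variable (hcd : c < d) (ht : ∀ i, c < t i) (htc : Tendsto t atTop (nhds c))
  (hf : ∀ i, ContinuousOn (f i) (Set.Ioc c (t i)))
  (hdisj : ∀ i j, i ≠ j →
      ∀ y, y ∈ Set.Ioc c (t i) → y ∈ Set.Ioc c (t j) → f i y ≠ f j y)

/-- membership of the bottom level in the interval. -/
lemma tau1_mem (k : ℕ) :
    tau hcd ht htc (k+1) ∈ Set.Ioc c (tau hcd ht htc k) :=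
  ⟨tau_pos hcd ht htc (k+1), (tau_succ_lt hcd ht htc k).le⟩

lemma sdiv_mem {k : ℕ} {y : ℝ}
    (hk : y ∈ Set.Ioc (tau hcd ht htc (k+1)) (tau hcd ht htc k)) :
    0 ≤ (tau hcd ht htc k - y) / (tau hcd ht htc k - tau hcd ht htc (k+1)) ∧
    (tau hcd ht htc k - y) / (tau hcd ht htc k - tau hcd ht htc (k+1)) < 1 := by
  have hpos : 0 < tau hcd ht htc k - tau hcd ht htc (k+1) :=
    sub_pos.2 (tau_succ_lt hcd ht htc k)
  constructor
  · exact div_nonneg (by linarith [hk.2]) hpos.le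
  · rw [div_lt_one hpos]
    linarith [hk.1]

lemma Ek_pin (k : ℕ) {y : ℝ} {i : ℕ}
    (hk : y ∈ Set.Ioc (tau hcd ht htc (k+1)) (tau hcd ht htc k)) (hyt : y ≤ t i) :
    Ek hcd ht htc hf hdisj k (f i y, y) = qval t f i := by
  have hik : i ∈ Lk hcd ht htc hf hdisj k :=
    (Lk_mem hcd ht htc hf hdisj k i).2 ((active_iff hcd ht htc hk i).1 hyt)
  have hik1 : i ∈ Lk hcd ht htc hf hdisj (k+1) :=
    (Lk_mem hcd ht htc hf hdisj (k+1) i).2 (hk.1.le.trans hyt)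
  have hy' : y ∈ Set.Ioc c (tau hcd ht htc k) :=
    ⟨(tau_pos hcd ht htc (k+1)).trans hk.1, hk.2⟩
  have h1 : pl (nodes hcd ht htc hf hdisj k y) (f i y) = qval t f i :=
    nodes_pin hcd ht htc hf hdisj k hy' hik
  have h2 : pl (nodes hcd ht htc hf hdisj k (tau hcd ht htc (k+1)))
      (f i (tau hcd ht htc (k+1))) = qval t f i :=
    nodes_pin hcd ht htc hf hdisj k (tau1_mem hcd ht htc k) hik
  have h3 : plinv (nodes hcd ht htc hf hdisj k (tau hcd ht htc (k+1)))
      (qval t f i) = f i (tau hcd ht htc (k+1)) := by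
    rw [← h2, plinv_pl (nodes_valid hcd ht htc hf hdisj k (tau1_mem hcd ht htc k))]
  have h4 : pl (nodes hcd ht htc hf hdisj (k+1) (tau hcd ht htc (k+1)))
      (f i (tau hcd ht htc (k+1))) = qval t f i :=
    nodes_pin hcd ht htc hf hdisj (k+1) ⟨tau_pos hcd ht htc (k+1), le_rfl⟩ hik1
  rw [Ek]
  simp only
  rw [h1, h3, h4]
  ring

lemma theta_pin {y : ℝ} {i : ℕ} (hy : c < y) (hyd : y ≤ d) (hyt : y ≤ t i) :
    theta hcd ht htc hf hdisj (f i y, y) = qval t f i := by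
  rw [theta]
  exact Ek_pin hcd ht htc hf hdisj _ (Kof_mem hcd ht htc hy hyd) hyt

lemma Ek_strictMono (k : ℕ) {y : ℝ}
    (hk : y ∈ Set.Ioc (tau hcd ht htc (k+1)) (tau hcd ht htc k)) :
    StrictMono (fun x => Ek hcd ht htc hf hdisj k (x, y)) := by
  obtain ⟨hs0, hs1⟩ := sdiv_mem hcd ht htc hk
  have hy' : y ∈ Set.Ioc c (tau hcd ht htc k) :=
    ⟨(tau_pos hcd ht htc (k+1)).trans hk.1, hk.2⟩
  have hA := pl_strictMono (nodes_valid hcd ht htc hf hdisj k hy')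
  have hI := plinv_strictMono (nodes_valid hcd ht htc hf hdisj k (tau1_mem hcd ht htc k))
  have hB := pl_strictMono (nodes_valid hcd ht htc hf hdisj (k+1)
    ⟨tau_pos hcd ht htc (k+1), le_rfl⟩)
  rw [show (fun x => Ek hcd ht htc hf hdisj k (x, y)) = fun x =>
    (1 - (tau hcd ht htc k - y) / (tau hcd ht htc k - tau hcd ht htc (k+1))) *
      pl (nodes hcd ht htc hf hdisj k y) x +
    (tau hcd ht htc k - y) / (tau hcd ht htc k - tau hcd ht htc (k+1)) *
      pl (nodes hcd ht htc hf hdisj (k+1) (tau hcd ht htc (k+1)))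
        (plinv (nodes hcd ht htc hf hdisj k (tau hcd ht htc (k+1)))
          (pl (nodes hcd ht htc hf hdisj k y) x)) from rfl]
  intro x x' hxx
  have e1 : pl (nodes hcd ht htc hf hdisj k y) x < pl (nodes hcd ht htc hf hdisj k y) x' :=
    hA hxx
  have e2 : pl (nodes hcd ht htc hf hdisj (k+1) (tau hcd ht htc (k+1)))
        (plinv (nodes hcd ht htc hf hdisj k (tau hcd ht htc (k+1)))
          (pl (nodes hcd ht htc hf hdisj k y) x)) ≤
      pl (nodes hcd ht htc hf hdisj (k+1) (tau hcd ht htc (k+1)))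
        (plinv (nodes hcd ht htc hf hdisj k (tau hcd ht htc (k+1)))
          (pl (nodes hcd ht htc hf hdisj k y) x')) :=
    hB.monotone (hI.monotone e1.le)
  nlinarith

lemma Ek_continuous_x (k : ℕ) (y : ℝ) :
    Continuous (fun x => Ek hcd ht htc hf hdisj k (x, y)) := by
  rw [show (fun x => Ek hcd ht htc hf hdisj k (x, y)) = fun x =>
    (1 - (tau hcd ht htc k - y) / (tau hcd ht htc k - tau hcd ht htc (k+1))) *
      pl (nodes hcd ht htc hf hdisj k y) x +
    (tau hcd ht htc k - y) / (tau hcd ht htc k - tau hcd ht htc (k+1)) *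
      pl (nodes hcd ht htc hf hdisj (k+1) (tau hcd ht htc (k+1)))
        (plinv (nodes hcd ht htc hf hdisj k (tau hcd ht htc (k+1)))
          (pl (nodes hcd ht htc hf hdisj k y) x)) from rfl]
  have hI := plinv_continuous (nodes_valid hcd ht htc hf hdisj k (tau1_mem hcd ht htc k))
  exact (continuous_const.mul (pl_continuous _)).add
    (continuous_const.mul ((pl_continuous _).comp (hI.comp (pl_continuous _))))

lemma Ek_surjective (k : ℕ) {y : ℝ}
    (hk : y ∈ Set.Ioc (tau hcd ht htc (k+1)) (tau hcd ht htc k)) :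
    Function.Surjective (fun x => Ek hcd ht htc hf hdisj k (x, y)) := by
  obtain ⟨hs0, hs1⟩ := sdiv_mem hcd ht htc hk
  have hy' : y ∈ Set.Ioc c (tau hcd ht htc k) :=
    ⟨(tau_pos hcd ht htc (k+1)).trans hk.1, hk.2⟩
  have hvI := nodes_valid hcd ht htc hf hdisj k (tau1_mem hcd ht htc k)
  have hcomp_top : Tendsto (fun x =>
      pl (nodes hcd ht htc hf hdisj (k+1) (tau hcd ht htc (k+1)))
        (plinv (nodes hcd ht htc hf hdisj k (tau hcd ht htc (k+1)))
          (pl (nodes hcd ht htc hf hdisj k y) x))) atTop atTop :=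
    (pl_tendsto_atTop _).comp ((mono_surj_tendsto_atTop
      (plinv_strictMono hvI).monotone (plinv_surjective hvI)).comp (pl_tendsto_atTop _))
  have hcomp_bot : Tendsto (fun x =>
      pl (nodes hcd ht htc hf hdisj (k+1) (tau hcd ht htc (k+1)))
        (plinv (nodes hcd ht htc hf hdisj k (tau hcd ht htc (k+1)))
          (pl (nodes hcd ht htc hf hdisj k y) x))) atBot atBot :=
    (pl_tendsto_atBot _).comp ((mono_surj_tendsto_atBot
      (plinv_strictMono hvI).monotone (plinv_surjective hvI)).comp (pl_tendsto_atBot _))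
  rw [show (fun x => Ek hcd ht htc hf hdisj k (x, y)) = fun x =>
    (1 - (tau hcd ht htc k - y) / (tau hcd ht htc k - tau hcd ht htc (k+1))) *
      pl (nodes hcd ht htc hf hdisj k y) x +
    (tau hcd ht htc k - y) / (tau hcd ht htc k - tau hcd ht htc (k+1)) *
      pl (nodes hcd ht htc hf hdisj (k+1) (tau hcd ht htc (k+1)))
        (plinv (nodes hcd ht htc hf hdisj k (tau hcd ht htc (k+1)))
          (pl (nodes hcd ht htc hf hdisj k y) x)) from rfl]
  refine Continuous.surjective ?_ ?_ ?_
  · have hI := plinv_continuous (nodes_valid hcd ht htc hf hdisj k (tau1_mem hcd ht htc k))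
    exact (continuous_const.mul (pl_continuous _)).add
      (continuous_const.mul ((pl_continuous _).comp (hI.comp (pl_continuous _))))
  · exact convex_tendsto_atTop hs0 hs1.le (pl_tendsto_atTop _) hcomp_top
  · exact convex_tendsto_atBot hs0 hs1.le (pl_tendsto_atBot _) hcomp_bot

end Main2

section Main3

variable {c d : ℝ} {t : ℕ → ℝ} {f : ℕ → ℝ → ℝ}
variable (hcd : c < d) (ht : ∀ i, c < t i) (htc : Tendsto t atTop (nhds c))
  (hf : ∀ i, ContinuousOn (f i) (Set.Ioc c (t i)))
  (hdisj : ∀ i j, i ≠ j →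
      ∀ y, y ∈ Set.Ioc c (t i) → y ∈ Set.Ioc c (t j) → f i y ≠ f j y)

lemma theta_eq_Ek {k : ℕ} {p : ℝ × ℝ}
    (hp : p.2 ∈ Set.Ioc (tau hcd ht htc (k+1)) (tau hcd ht htc k)) :
    theta hcd ht htc hf hdisj p = Ek hcd ht htc hf hdisj k p := by
  rw [theta, Kof_eq hcd ht htc hp]

lemma Ek_junction (k : ℕ) (x : ℝ) :
    Ek hcd ht htc hf hdisj k (x, tau hcd ht htc (k+1)) =
      Ek hcd ht htc hf hdisj (k+1) (x, tau hcd ht htc (k+1)) := by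
  have hne : tau hcd ht htc k - tau hcd ht htc (k+1) ≠ 0 :=
    ne_of_gt (sub_pos.2 (tau_succ_lt hcd ht htc k))
  rw [Ek, Ek]
  simp only [div_self hne, sub_self (tau hcd ht htc (k+1)), zero_div,
    plinv_pl (nodes_valid hcd ht htc hf hdisj k (tau1_mem hcd ht htc k))]
  ring

lemma Ek_contOn (k : ℕ) :
    ContinuousOn (Ek hcd ht htc hf hdisj k)
      {p : ℝ × ℝ | p.2 ∈ Set.Icc (tau hcd ht htc (k+1)) (tau hcd ht htc k)} := by
  set S := Set.Icc (tau hcd ht htc (k+1)) (tau hcd ht htc k) with hS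
  have hsubIoc : ∀ i ∈ Lk hcd ht htc hf hdisj k, S ⊆ Set.Ioc c (t i) := by
    intro i hi y hy
    exact ⟨(tau_pos hcd ht htc (k+1)).trans_le hy.1,
      hy.2.trans ((Lk_mem hcd ht htc hf hdisj k i).1 hi)⟩
  have hbase : ContinuousOn (fun p : ℝ × ℝ =>
      pl (nodes hcd ht htc hf hdisj k p.2) p.1) {p : ℝ × ℝ | p.2 ∈ S} := by
    simp only [nodes]
    refine pl_param_continuousOn (fun i hi => (hf i).mono (hsubIoc i hi)) ?_
    letI : IsTrans ℕ (R t f) := ⟨fun _ _ _ h1 h2 => R_trans ht hf hdisj h1 h2⟩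
    have hp : (Lk hcd ht htc hf hdisj k).Pairwise (R t f) :=
      List.isChain_iff_pairwise.1 (Lk_chain hcd ht htc hf hdisj k)
    refine List.Pairwise.isChain (List.Pairwise.imp_of_mem ?_ hp)
    intro i j hi hj hR y hy
    have hymem : y ∈ Set.Ioc c (min (t i) (t j)) :=
      ⟨(tau_pos hcd ht htc (k+1)).trans_le hy.1,
        le_min (hy.2.trans ((Lk_mem hcd ht htc hf hdisj k i).1 hi))
          (hy.2.trans ((Lk_mem hcd ht htc hf hdisj k j).1 hj))⟩
    exact (R_iff_at ht hf hdisj hR.1 hymem).1 hR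
  have hI := plinv_continuous (nodes_valid hcd ht htc hf hdisj k (tau1_mem hcd ht htc k))
  have hsnd : ContinuousOn (fun p : ℝ × ℝ =>
      (tau hcd ht htc k - p.2) / (tau hcd ht htc k - tau hcd ht htc (k+1)))
      {p : ℝ × ℝ | p.2 ∈ S} :=
    ((continuousOn_const.sub continuous_snd.continuousOn).div_const _)
  exact ((continuousOn_const.sub hsnd).mul hbase).add
    (hsnd.mul (((pl_continuous _).comp hI).comp_continuousOn hbase))

lemma theta_contOn :
    ContinuousOn (theta hcd ht htc hf hdisj) {p : ℝ × ℝ | p.2 ∈ Set.Ioc c d} := by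
  intro p₀ hp₀
  obtain ⟨x₀, y₀⟩ := p₀
  simp only [Set.mem_setOf_eq] at hp₀
  set k := Kof hcd ht htc y₀ with hkdef
  have hk : y₀ ∈ Set.Ioc (tau hcd ht htc (k+1)) (tau hcd ht htc k) :=
    Kof_mem hcd ht htc hp₀.1 hp₀.2
  have hθ₀ : theta hcd ht htc hf hdisj (x₀, y₀) = Ek hcd ht htc hf hdisj k (x₀, y₀) :=
    theta_eq_Ek hcd ht htc hf hdisj hk
  clear_value k
  clear hkdef
  have hSkcont : ContinuousOn (theta hcd ht htc hf hdisj)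
      {p : ℝ × ℝ | p.2 ∈ Set.Ioc (tau hcd ht htc (k+1)) (tau hcd ht htc k)} := by
    refine ((Ek_contOn hcd ht htc hf hdisj k).mono ?_).congr ?_
    · intro p hp
      exact Set.Ioc_subset_Icc_self hp
    · intro p hp
      exact theta_eq_Ek hcd ht htc hf hdisj hp
  have h1 : ContinuousWithinAt (theta hcd ht htc hf hdisj)
      {p : ℝ × ℝ | p.2 ∈ Set.Ioc (tau hcd ht htc (k+1)) (tau hcd ht htc k)} (x₀, y₀) :=
    hSkcont _ hk
  rcases eq_or_lt_of_le hk.2 with heq | hlt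
  · -- y₀ is at the top of the interval
    cases k with
    | zero =>
      -- y₀ = d : one-sided from below suffices since p.2 ≤ d on the strip
      refine Filter.Tendsto.mono_left h1 ?_
      have hVopen : IsOpen {p : ℝ × ℝ | p.2 ∈ Set.Ioi (tau hcd ht htc 1)} :=
        continuous_snd.isOpen_preimage _ isOpen_Ioi
      rw [nhdsWithin_restrict _ (show (x₀, y₀) ∈ {p : ℝ × ℝ | p.2 ∈ Set.Ioi (tau hcd ht htc 1)}
        from hk.1) hVopen]
      refine nhdsWithin_mono _ ?_
      rintro p ⟨hp1, hp2⟩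
      exact ⟨hp2, (tau_zero hcd ht htc).symm ▸ hp1.2⟩
    | succ m =>
      -- junction with the interval above
      have hknot : y₀ = tau hcd ht htc (m+1) := heq
      have hU : ContinuousWithinAt (Ek hcd ht htc hf hdisj m)
          {p : ℝ × ℝ | p.2 ∈ Set.Ioc (tau hcd ht htc (m+1)) (tau hcd ht htc m)} (x₀, y₀) := by
        refine ((Ek_contOn hcd ht htc hf hdisj m) _ ?_).mono ?_
        · simp only [Set.mem_setOf_eq, hknot]
          exact ⟨le_rfl, (tau_succ_lt hcd ht htc m).le⟩
        · intro p hp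
          exact Set.Ioc_subset_Icc_self hp
      have h2 : ContinuousWithinAt (theta hcd ht htc hf hdisj)
          {p : ℝ × ℝ | p.2 ∈ Set.Ioc (tau hcd ht htc (m+1)) (tau hcd ht htc m)} (x₀, y₀) := by
        refine hU.congr ?_ ?_
        · intro p hp
          exact theta_eq_Ek hcd ht htc hf hdisj hp
        · rw [theta_eq_Ek hcd ht htc hf hdisj (p := (x₀, y₀)) hk]
          rw [show ((x₀, y₀) : ℝ × ℝ) = (x₀, tau hcd ht htc (m+1)) from by rw [hknot]]
          exact (Ek_junction hcd ht htc hf hdisj m x₀).symm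
      have hcomb := h1.union h2
      refine Filter.Tendsto.mono_left hcomb ?_
      have hVopen : IsOpen {p : ℝ × ℝ |
          p.2 ∈ Set.Ioo (tau hcd ht htc (m+1+1)) (tau hcd ht htc m)} :=
        continuous_snd.isOpen_preimage _ isOpen_Ioo
      rw [nhdsWithin_restrict _ (show ((x₀, y₀) : ℝ × ℝ) ∈ {p : ℝ × ℝ |
          p.2 ∈ Set.Ioo (tau hcd ht htc (m+1+1)) (tau hcd ht htc m)} from
        ⟨hk.1, by rw [hknot]; exact tau_succ_lt hcd ht htc m⟩) hVopen]
      refine nhdsWithin_mono _ ?_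
      rintro p ⟨hp1, hp2⟩
      rcases le_or_gt p.2 (tau hcd ht htc (m+1)) with h | h
      · exact Or.inl ⟨hp2.1, h⟩
      · exact Or.inr ⟨h, hp2.2.le⟩
  · -- interior point
    refine Filter.Tendsto.mono_left h1 ?_
    have hVopen : IsOpen {p : ℝ × ℝ |
        p.2 ∈ Set.Ioo (tau hcd ht htc (k+1)) (tau hcd ht htc k)} :=
      continuous_snd.isOpen_preimage _ isOpen_Ioo
    rw [nhdsWithin_restrict _ (show ((x₀, y₀) : ℝ × ℝ) ∈ {p : ℝ × ℝ |
        p.2 ∈ Set.Ioo (tau hcd ht htc (k+1)) (tau hcd ht htc k)} from ⟨hk.1, hlt⟩) hVopen]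
    refine nhdsWithin_mono _ ?_
    rintro p ⟨hp1, hp2⟩
    exact ⟨hp2.1, hp2.2.le⟩

end Main3

/-! ### continuity of the fiberwise inverse -/

lemma inv_param_continuousOn {S : Set ℝ} {g : ℝ → ℝ → ℝ}
    (hg : ContinuousOn (fun p : ℝ × ℝ => g p.2 p.1) {p : ℝ × ℝ | p.2 ∈ S})
    (hmono : ∀ y ∈ S, StrictMono (g y)) (hsurj : ∀ y ∈ S, Function.Surjective (g y)) :
    ContinuousOn (fun p : ℝ × ℝ => Function.invFun (g p.2) p.1)
      {p : ℝ × ℝ | p.2 ∈ S} := by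
  intro p₀ hp₀
  obtain ⟨z₀, y₀⟩ := p₀
  simp only [Set.mem_setOf_eq] at hp₀
  set x₀ := Function.invFun (g y₀) z₀ with hx₀def
  have hx₀ : g y₀ x₀ = z₀ := Function.invFun_eq (hsurj y₀ hp₀ z₀)
  have key : ∀ a : ℝ, ∀ b : ℝ, g y₀ a < z₀ → z₀ < g y₀ b →
      ∀ᶠ p : ℝ × ℝ in nhdsWithin (z₀, y₀) {p : ℝ × ℝ | p.2 ∈ S},
        a < Function.invFun (g p.2) p.1 ∧ Function.invFun (g p.2) p.1 < b := by
    intro a b hab hbb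
    have hmk : ∀ u : ℝ, ContinuousWithinAt (fun p : ℝ × ℝ => g p.2 u)
        {p : ℝ × ℝ | p.2 ∈ S} (z₀, y₀) := by
      intro u
      have hmap : Continuous (fun p : ℝ × ℝ => ((u, p.2) : ℝ × ℝ)) := by continuity
      exact ContinuousWithinAt.comp (g := fun p : ℝ × ℝ => g p.2 p.1)
        (f := fun p : ℝ × ℝ => ((u, p.2) : ℝ × ℝ)) (x := (z₀, y₀))
        (s := {p : ℝ × ℝ | p.2 ∈ S}) (t := {p : ℝ × ℝ | p.2 ∈ S})
        (hg (u, y₀) hp₀) hmap.continuousWithinAt (fun p hp => hp)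
    have hCa := hmk a
    have hCb := hmk b
    have hfst : ContinuousWithinAt (fun p : ℝ × ℝ => p.1)
        {p : ℝ × ℝ | p.2 ∈ S} (z₀, y₀) := continuous_fst.continuousWithinAt
    have hEa : ∀ᶠ p : ℝ × ℝ in nhdsWithin (z₀, y₀) {p : ℝ × ℝ | p.2 ∈ S},
        g p.2 a < p.1 := by
      have htend := hfst.sub hCa
      have : (0:ℝ) < z₀ - g y₀ a := by linarith
      filter_upwards [htend.eventually (eventually_gt_nhds this)] with p hp
      simpa using hp
    have hEb : ∀ᶠ p : ℝ × ℝ in nhdsWithin (z₀, y₀) {p : ℝ × ℝ | p.2 ∈ S},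
        p.1 < g p.2 b := by
      have htend := hCb.sub hfst
      have : (0:ℝ) < g y₀ b - z₀ := by linarith
      filter_upwards [htend.eventually (eventually_gt_nhds this)] with p hp
      simpa using hp
    filter_upwards [hEa, hEb, self_mem_nhdsWithin] with p h1 h2 hpS
    have hPS : p.2 ∈ S := hpS
    have hglt : g p.2 (Function.invFun (g p.2) p.1) = p.1 :=
      Function.invFun_eq (hsurj p.2 hPS p.1)
    constructor
    · by_contra hcon
      have : g p.2 (Function.invFun (g p.2) p.1) ≤ g p.2 a :=
        (hmono p.2 hPS).monotone (not_lt.1 hcon)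
      rw [hglt] at this
      linarith
    · by_contra hcon
      have : g p.2 b ≤ g p.2 (Function.invFun (g p.2) p.1) :=
        (hmono p.2 hPS).monotone (not_lt.1 hcon)
      rw [hglt] at this
      linarith
  rw [ContinuousWithinAt]
  rw [tendsto_order]
  constructor
  · intro a ha
    have h1 : g y₀ a < z₀ := by
      rw [← hx₀]
      exact hmono y₀ hp₀ ha
    have h2 : z₀ < g y₀ (x₀ + 1) := by
      rw [← hx₀]
      exact hmono y₀ hp₀ (by linarith)
    filter_upwards [key a (x₀ + 1) h1 h2] with p hp
    exact hp.1
  · intro b hb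
    have h1 : g y₀ (x₀ - 1) < z₀ := by
      rw [← hx₀]
      exact hmono y₀ hp₀ (by linarith)
    have h2 : z₀ < g y₀ b := by
      rw [← hx₀]
      exact hmono y₀ hp₀ hb
    filter_upwards [key (x₀ - 1) b h1 h2] with p hp
    exact hp.2

end Stmt17

set_option maxHeartbeats 1000000 in
open Stmt17 in
/-- given a sequence of levels `t i ∈ (c,d]` tending to `c` and continuous
functions `f i : (c, t i] → ℝ` with pairwise disjoint graphs, there is a homeomorphism of
the strip `ℝ × (c,d]` preserving each horizontal line and mapping the graph of each `f i`
onto a vertical segment `{q i} × (c, t i]`. -/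
theorem stmt17 (c d : ℝ) (hcd : c < d) (t : ℕ → ℝ) (ht : ∀ i, t i ∈ Set.Ioc c d)
    (htc : Filter.Tendsto t Filter.atTop (nhds c))
    (f : ℕ → ℝ → ℝ) (hf : ∀ i, ContinuousOn (f i) (Set.Ioc c (t i)))
    (hdisj : ∀ i j, i ≠ j →
      ∀ y, y ∈ Set.Ioc c (t i) → y ∈ Set.Ioc c (t j) → f i y ≠ f j y) :
    ∃ η : ↥(Set.univ ×ˢ Set.Ioc c d : Set (ℝ × ℝ)) ≃ₜ
          ↥(Set.univ ×ˢ Set.Ioc c d : Set (ℝ × ℝ)),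
      (∀ p : ↥(Set.univ ×ˢ Set.Ioc c d : Set (ℝ × ℝ)),
        ((η p : ℝ × ℝ)).2 = (p : ℝ × ℝ).2) ∧
      (∀ i, ∃ q : ℝ, Subtype.val '' (⇑η ''
          {p : ↥(Set.univ ×ˢ Set.Ioc c d : Set (ℝ × ℝ)) |
            (p : ℝ × ℝ).2 ∈ Set.Ioc c (t i) ∧ (p : ℝ × ℝ).1 = f i (p : ℝ × ℝ).2}) =
        {r : ℝ × ℝ | r.2 ∈ Set.Ioc c (t i) ∧ r.1 = q}) := by
  classical
  have ht' : ∀ i, c < t i := fun i => (ht i).1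
  have htd : ∀ i, t i ≤ d := fun i => (ht i).2
  set θ : ℝ × ℝ → ℝ := theta hcd ht' htc hf hdisj with hθdef
  have hmono : ∀ y ∈ Set.Ioc c d, StrictMono (fun x => θ (x, y)) := by
    intro y hy
    exact Ek_strictMono hcd ht' htc hf hdisj _ (Kof_mem hcd ht' htc hy.1 hy.2)
  have hsurj : ∀ y ∈ Set.Ioc c d, Function.Surjective (fun x => θ (x, y)) := by
    intro y hy
    exact Ek_surjective hcd ht' htc hf hdisj _ (Kof_mem hcd ht' htc hy.1 hy.2)
  have hθcont : ContinuousOn θ {p : ℝ × ℝ | p.2 ∈ Set.Ioc c d} :=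
    theta_contOn hcd ht' htc hf hdisj
  set ginv : ℝ × ℝ → ℝ := fun p => Function.invFun (fun x => θ (x, p.2)) p.1 with hginvdef
  have hginv_cont : ContinuousOn ginv {p : ℝ × ℝ | p.2 ∈ Set.Ioc c d} := by
    exact inv_param_continuousOn (g := fun y x => θ (x, y)) hθcont hmono hsurj
  have hright : ∀ (x y : ℝ), y ∈ Set.Ioc c d → θ (ginv (x, y), y) = x := by
    intro x y hy
    exact Function.invFun_eq (hsurj y hy x)
  have hleft : ∀ (x y : ℝ), y ∈ Set.Ioc c d → ginv (θ (x, y), y) = x := by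
    intro x y hy
    exact Function.leftInverse_invFun (hmono y hy).injective x
  have hmemS : ∀ p : ℝ × ℝ, p ∈ (Set.univ ×ˢ Set.Ioc c d : Set (ℝ × ℝ)) ↔
      p.2 ∈ Set.Ioc c d := by
    intro p
    simp [Set.mem_prod]
  refine ⟨Homeomorph.mk (Equiv.mk
    (fun p => ⟨(θ p, (p : ℝ × ℝ).2), (hmemS _).2 ((hmemS _).1 p.2)⟩)
    (fun p => ⟨(ginv p, (p : ℝ × ℝ).2), (hmemS _).2 ((hmemS _).1 p.2)⟩)
    ?_ ?_) ?_ ?_, ?_, ?_⟩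
  · -- left inverse
    rintro ⟨⟨x, y⟩, hp⟩
    have hy : y ∈ Set.Ioc c d := (hmemS _).1 hp
    apply Subtype.ext
    simp only
    exact Prod.ext (hleft x y hy) rfl
  · -- right inverse
    rintro ⟨⟨x, y⟩, hp⟩
    have hy : y ∈ Set.Ioc c d := (hmemS _).1 hp
    apply Subtype.ext
    simp only
    exact Prod.ext (hright x y hy) rfl
  · -- continuity forward
    apply Continuous.subtype_mk
    refine Continuous.prodMk ?_ (continuous_snd.comp continuous_subtype_val)
    exact hθcont.comp_continuous continuous_subtype_val
      (fun p => (hmemS _).1 p.2)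
  · -- continuity backward
    apply Continuous.subtype_mk
    refine Continuous.prodMk ?_ (continuous_snd.comp continuous_subtype_val)
    exact hginv_cont.comp_continuous continuous_subtype_val
      (fun p => (hmemS _).1 p.2)
  · -- preserves horizontal lines
    intro p
    rfl
  · -- straightens each graph
    intro i
    refine ⟨qval t f i, ?_⟩
    ext r
    constructor
    · rintro ⟨pR, ⟨p, ⟨hpt, hpf⟩, rfl⟩, rfl⟩
      obtain ⟨⟨x, y⟩, hpmem⟩ := p
      simp only at hpt hpf
      have hy : y ∈ Set.Ioc c d := (hmemS _).1 hpmem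
      have hθp : θ (x, y) = qval t f i := by
        rw [hpf]
        exact theta_pin hcd ht' htc hf hdisj hpt.1 hy.2 hpt.2
      exact ⟨hpt, hθp⟩
    · rintro ⟨hr2, hr1⟩
      obtain ⟨r1, r2⟩ := r
      simp only at hr2 hr1
      have hrd : r2 ∈ Set.Ioc c d := ⟨hr2.1, hr2.2.trans (htd i)⟩
      refine ⟨_, ⟨⟨(f i r2, r2), (hmemS _).2 hrd⟩, ⟨hr2, rfl⟩, rfl⟩, ?_⟩
      show ((θ (f i r2, r2), r2) : ℝ × ℝ) = (r1, r2)
      refine Prod.ext ?_ rfl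
      show θ (f i r2, r2) = r1
      rw [hθdef, theta_pin hcd ht' htc hf hdisj hr2.1 hrd.2 hr2.2]
      exact hr1.symm
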